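/- Let G be a finite simple connected graph on n vertices whose edge set E has exactly n elements (so that G is a uni-cyclic graph U_{n,m}), and let c be a cycle in G of length m with edge set C = {e_1, ..., e_m}. Then a subset F ⊆ E is a face of the spanning simplicial complex Δ_s(U_{n,m}) — that is, F is contained in the edge set of some spanning tree of G — if and only if F does not contain the whole cycle edge set C. -/

import Mathlib

open SimpleGraph

private lemma conn_delete_cycle_edge {V : Type*} {H : SimpleGraph V} (hH : H.Connected)
    {u : V} {p : H.Walk u u} (hp : p.IsCycle) {e : Sym2 V} (he : e ∈ p.edges) :
    (H \ SimpleGraph.fromEdgeSet {e}).Connected := by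
  induction e using Sym2.ind with
  | _ a b =>
    have reach : (H \ SimpleGraph.fromEdgeSet {s(a, b)}).Reachable a b :=
      (SimpleGraph.adj_and_reachable_delete_edges_iff_exists_cycle.mpr ⟨u, p, hp, he⟩).2
    have key : ∀ {x y : V} (_ : H.Walk x y),
        (H \ SimpleGraph.fromEdgeSet {s(a, b)}).Reachable x y := by
      intro x y w
      induction w with
      | nil => exact Reachable.refl _
      | @cons x z y h q ih =>
        refine Reachable.trans ?_ ih
        by_cases hxe : s(x, z) = s(a, b)
        · rw [Sym2.eq_iff] at hxe
          rcases hxe with ⟨rfl, rfl⟩ | ⟨rfl, rfl⟩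
          · exact reach
          · exact reach.symm
        · refine SimpleGraph.Adj.reachable ?_
          rw [SimpleGraph.sdiff_adj]
          refine ⟨h, ?_⟩
          rw [SimpleGraph.fromEdgeSet_adj]
          rintro ⟨hmem, -⟩
          exact hxe (Set.mem_singleton_iff.mp hmem)
    exact (SimpleGraph.connected_iff _).mpr ⟨fun x y => key ((hH.preconnected x y).some), hH.nonempty⟩

private lemma card_le_ncard_edges {V : Type*} [Fintype V] :
    ∀ (k : ℕ) (H : SimpleGraph V), H.Connected → H.edgeSet.ncard = k →
      Fintype.card V ≤ k + 1 := by
  intro k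
  induction k using Nat.strong_induction_on with
  | _ k ih =>
    intro H hH hk
    by_cases hac : H.IsAcyclic
    · have hfin : H.edgeSet.Finite := Set.toFinite _
      haveI : Fintype H.edgeSet := hfin.fintype
      have ht : H.IsTree := ⟨hH, hac⟩
      have h1 := ht.card_edgeFinset
      have h2 : H.edgeFinset.card = k := by
        rw [← hk, Set.ncard_eq_toFinset_card']
        exact congrArg Finset.card (Set.toFinset_congr rfl)
      omega
    · rw [SimpleGraph.IsAcyclic] at hac
      push_neg at hac
      obtain ⟨u, p, hp⟩ := hac
      have hlen : p.edges ≠ [] := by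
        have h3 := hp.three_le_length
        intro h
        rw [← SimpleGraph.Walk.length_edges, h] at h3
        simp at h3
      obtain ⟨e, he⟩ := List.exists_mem_of_ne_nil _ hlen
      have heE : e ∈ H.edgeSet := p.edges_subset_edgeSet he
      have hH' := conn_delete_cycle_edge hH hp he
      have hne : (H \ SimpleGraph.fromEdgeSet {e}).edgeSet = H.edgeSet \ {e} := by
        rw [SimpleGraph.edgeSet_sdiff, SimpleGraph.edgeSet_fromEdgeSet,
          SimpleGraph.edgeSet_sdiff_sdiff_isDiag]
      have hk1 : (H.edgeSet \ {e}).ncard = k - 1 := by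
        rw [Set.ncard_diff_singleton_of_mem heE, hk]
      have hk0 : 1 ≤ k := hk ▸ (Set.ncard_pos (Set.toFinite _)).mpr ⟨e, heE⟩
      have := ih (k - 1) (by omega) _ hH' (hne ▸ hk1)
      omega

theorem face_iff_not_contains_cycle
    {V : Type*} [Fintype V] [DecidableEq V] (n m : ℕ)
    (G : SimpleGraph V) [DecidableRel G.Adj]
    (hconn : G.Connected)
    (hV : Fintype.card V = n)
    (hE : G.edgeFinset.card = n)
    (v : V) (c : G.Walk v v) (hc : c.IsCycle) (hm : c.length = m)
    (F : Finset (Sym2 V)) (hF : F ⊆ G.edgeFinset) :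
    (∃ T : Finset (Sym2 V), T ⊆ G.edgeFinset ∧
        (SimpleGraph.fromEdgeSet (↑T : Set (Sym2 V))).IsTree ∧ F ⊆ T) ↔
      ¬ (c.edges.toFinset ⊆ F) := by
  constructor
  · rintro ⟨T, hTE, hTtree, hFT⟩ hcF
    -- transfer the cycle into the tree, contradiction
    have hsub : ∀ e ∈ c.edges, e ∈ (SimpleGraph.fromEdgeSet (↑T : Set (Sym2 V))).edgeSet := by
      intro e he
      rw [SimpleGraph.edgeSet_fromEdgeSet]
      refine ⟨hFT (hcF (List.mem_toFinset.mpr he)), ?_⟩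
      exact G.not_isDiag_of_mem_edgeSet (c.edges_subset_edgeSet he)
    exact hTtree.IsAcyclic (c.transfer _ hsub) (hc.transfer hsub)
  · intro hcF
    obtain ⟨e, heC, heF⟩ := Finset.not_subset.mp hcF
    rw [List.mem_toFinset] at heC
    have heE : e ∈ G.edgeSet := c.edges_subset_edgeSet heC
    refine ⟨G.edgeFinset.erase e, Finset.erase_subset _ _, ?_,
      Finset.subset_erase.mpr ⟨hF, heF⟩⟩
    have hcoe : ((G.edgeFinset.erase e : Finset (Sym2 V)) : Set (Sym2 V)) =
        G.edgeSet \ {e} := by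
      rw [Finset.coe_erase, SimpleGraph.coe_edgeFinset]
    have hGeq : SimpleGraph.fromEdgeSet ((G.edgeFinset.erase e : Finset (Sym2 V)) : Set (Sym2 V)) =
        G \ SimpleGraph.fromEdgeSet {e} := by
      rw [hcoe]
      apply SimpleGraph.edgeSet_injective
      rw [SimpleGraph.edgeSet_fromEdgeSet, SimpleGraph.edgeSet_sdiff,
        SimpleGraph.edgeSet_fromEdgeSet, SimpleGraph.edgeSet_sdiff_sdiff_isDiag]
      ext f
      simp only [Set.mem_diff, Set.mem_singleton_iff, Set.mem_setOf_eq]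
      constructor
      · rintro ⟨⟨hf1, hf2⟩, -⟩
        exact ⟨hf1, hf2⟩
      · rintro ⟨hf1, hf2⟩
        exact ⟨⟨hf1, hf2⟩, fun hd => G.not_isDiag_of_mem_edgeSet hf1 hd⟩
    rw [hGeq]
    have hconn' : (G \ SimpleGraph.fromEdgeSet {e}).Connected :=
      conn_delete_cycle_edge hconn hc heC
    have hncard : (G \ SimpleGraph.fromEdgeSet {e}).edgeSet.ncard = n - 1 := by
      rw [SimpleGraph.edgeSet_sdiff, SimpleGraph.edgeSet_fromEdgeSet,
        SimpleGraph.edgeSet_sdiff_sdiff_isDiag, Set.ncard_diff_singleton_of_mem heE]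
      congr 1
      rw [← hE, Set.ncard_eq_toFinset_card']
      exact congrArg Finset.card (Set.toFinset_congr rfl)
    refine ⟨hconn', ?_⟩
    intro u p hp
    -- if there were a cycle, delete one of its edges: still connected with n-2 edges
    have hlen : p.edges ≠ [] := by
      have h3 := hp.three_le_length
      intro h
      rw [← SimpleGraph.Walk.length_edges, h] at h3
      simp at h3
    obtain ⟨e', he'⟩ := List.exists_mem_of_ne_nil _ hlen
    have he'E : e' ∈ (G \ SimpleGraph.fromEdgeSet {e}).edgeSet := p.edges_subset_edgeSet he'
    have hconn'' := conn_delete_cycle_edge hconn' hp he'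
    have hncard' : ((G \ SimpleGraph.fromEdgeSet {e}) \ SimpleGraph.fromEdgeSet {e'}).edgeSet.ncard
        = n - 1 - 1 := by
      rw [SimpleGraph.edgeSet_sdiff, SimpleGraph.edgeSet_fromEdgeSet,
        SimpleGraph.edgeSet_sdiff_sdiff_isDiag, Set.ncard_diff_singleton_of_mem he'E, hncard]
    have hn2 : 1 ≤ n - 1 := hncard ▸ (Set.ncard_pos (Set.toFinite _)).mpr ⟨e', he'E⟩
    have hn1 : 1 ≤ n := by
      have : e ∈ G.edgeFinset := SimpleGraph.mem_edgeFinset.mpr heE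
      have := Finset.card_pos.mpr ⟨e, this⟩
      omega
    have hle := card_le_ncard_edges _ _ hconn'' hncard'
    omega
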